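/- (Inversion lemma.) Fix an integer N ≥ 0, points y_1, …, y_N ∈ ℝ, and a real n > 0. For t > 0 with At ≤ a define the kernel deconvolution estimate f̂_t(x) = (2a/(n t²)) Σ_{k=0}^{∞} Σ_{i=1}^{N} K'((x − (2k+1)a − y_i)/t) (for each x only finitely many terms are nonzero). Then for all h, t > 0 with Ah ≤ a and At ≤ a, and all x ∈ ℝ, (K_h ⋆ f̂_t)(x) = (K_t ⋆ f̂_h)(x), where ⋆ denotes convolution on ℝ. -/

import Mathlib

open MeasureTheory Real
open Function

lemma aux_hcs_left {A : ℝ} {g : ℝ → ℝ} (hg : Function.support g ⊆ Set.Icc (-A) A)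
    (b r : ℝ) (hr : 0 < r) : HasCompactSupport (fun u : ℝ => g ((b - u) / r)) := by
  apply HasCompactSupport.intro (isCompact_Icc (a := b - A * r) (b := b + A * r))
  intro u hu
  by_contra hne
  have h1 := hg (Function.mem_support.mpr hne)
  rw [Set.mem_Icc] at h1
  obtain ⟨h1, h2⟩ := h1
  rw [le_div_iff₀ hr] at h1
  rw [div_le_iff₀ hr] at h2
  exact hu (Set.mem_Icc.mpr ⟨by linarith, by linarith⟩)

lemma aux_hcs_right {A : ℝ} {g : ℝ → ℝ} (hg : Function.support g ⊆ Set.Icc (-A) A)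
    (c r : ℝ) (hr : 0 < r) : HasCompactSupport (fun u : ℝ => g ((u - c) / r)) := by
  apply HasCompactSupport.intro (isCompact_Icc (a := c - A * r) (b := c + A * r))
  intro u hu
  by_contra hne
  have h1 := hg (Function.mem_support.mpr hne)
  rw [Set.mem_Icc] at h1
  obtain ⟨h1, h2⟩ := h1
  rw [le_div_iff₀ hr] at h1
  rw [div_le_iff₀ hr] at h2
  exact hu (Set.mem_Icc.mpr ⟨by linarith, by linarith⟩)

lemma aux_core {A : ℝ} (K : ℝ → ℝ) (hK : ContDiff ℝ 1 K)
    (hKsupp : Function.support K ⊆ Set.Icc (-A) A)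
    (x c s r : ℝ) (hs : 0 < s) (hr : 0 < r) :
    s * ∫ u, K ((x - u) / s) * deriv K ((u - c) / r)
      = r * ∫ u, K ((x - u) / r) * deriv K ((u - c) / s) := by
  have hKc : Continuous K := hK.continuous
  have hK'c : Continuous (deriv K) := hK.continuous_deriv le_rfl
  have hK'supp : Function.support (deriv K) ⊆ Set.Icc (-A) A :=
    support_deriv_subset.trans (closure_minimal hKsupp isClosed_Icc)
  have hKd : Differentiable ℝ K := hK.differentiable one_ne_zero
  -- change of variables u ↦ x + c - u
  have cov : (∫ u, K ((x - u) / s) * deriv K ((u - c) / r))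
      = ∫ u, deriv K ((x - u) / r) * K ((u - c) / s) := by
    have h0 := integral_sub_left_eq_self
      (fun u => K ((x - u) / s) * deriv K ((u - c) / r)) (volume : Measure ℝ) (x + c)
    rw [← h0]
    congr 1
    ext u
    have e1 : (x - (x + c - u)) / s = (u - c) / s := by ring
    have e2 : ((x + c - u) - c) / r = (x - u) / r := by ring
    rw [e1, e2, mul_comm]
  rw [cov]
  -- integration by parts
  have hu : ∀ z : ℝ, HasDerivAt (fun z => K ((x - z) / r)) (-r⁻¹ * deriv K ((x - z) / r)) z := by
    intro z
    have h1 : HasDerivAt (fun z : ℝ => (x - z) / r) (-r⁻¹) z := by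
      simpa [neg_div] using ((hasDerivAt_id z).const_sub x).div_const r
    have h2 : HasDerivAt (fun z => K ((x - z) / r)) (deriv K ((x - z) / r) * -r⁻¹) z :=
      (hKd _).hasDerivAt.comp z h1
    simpa [mul_comm] using h2
  have hv : ∀ z : ℝ, HasDerivAt (fun z => s * K ((z - c) / s)) (deriv K ((z - c) / s)) z := by
    intro z
    have h1 : HasDerivAt (fun z : ℝ => (z - c) / s) s⁻¹ z := by
      simpa using ((hasDerivAt_id z).sub_const c).div_const s
    have h2 : HasDerivAt (fun z => s * K ((z - c) / s)) (s * (deriv K ((z - c) / s) * s⁻¹)) z :=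
      ((hKd _).hasDerivAt.comp z h1).const_mul s
    convert h2 using 1
    field_simp
  have contu : Continuous fun z : ℝ => K ((x - z) / r) :=
    hKc.comp ((continuous_const.sub continuous_id).div_const r)
  have contu' : Continuous fun z : ℝ => -r⁻¹ * deriv K ((x - z) / r) :=
    continuous_const.mul (hK'c.comp ((continuous_const.sub continuous_id).div_const r))
  have contv : Continuous fun z : ℝ => s * K ((z - c) / s) :=
    continuous_const.mul (hKc.comp ((continuous_id.sub continuous_const).div_const s))
  have contv' : Continuous fun z : ℝ => deriv K ((z - c) / s) :=
    hK'c.comp ((continuous_id.sub continuous_const).div_const s)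
  have hcsu : HasCompactSupport fun z : ℝ => K ((x - z) / r) := aux_hcs_left hKsupp x r hr
  have i1 : Integrable ((fun z : ℝ => K ((x - z) / r)) * fun z => deriv K ((z - c) / s)) :=
    (contu.mul contv').integrable_of_hasCompactSupport hcsu.mul_right
  have i2 : Integrable ((fun z : ℝ => -r⁻¹ * deriv K ((x - z) / r)) * fun z => s * K ((z - c) / s)) := by
    apply (contu'.mul contv).integrable_of_hasCompactSupport
    apply HasCompactSupport.intro (isCompact_Icc (a := x - A * r) (b := x + A * r))
    intro u hu'
    have : deriv K ((x - u) / r) = 0 := by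
      by_contra hne
      have h1 := hK'supp (Function.mem_support.mpr hne)
      rw [Set.mem_Icc] at h1
      obtain ⟨h1, h2⟩ := h1
      rw [le_div_iff₀ hr] at h1
      rw [div_le_iff₀ hr] at h2
      exact hu' (Set.mem_Icc.mpr ⟨by linarith, by linarith⟩)
    simp [Pi.mul_apply, this]
  have i3 : Integrable ((fun z : ℝ => K ((x - z) / r)) * fun z => s * K ((z - c) / s)) :=
    (contu.mul contv).integrable_of_hasCompactSupport hcsu.mul_right
  have ibp := integral_mul_deriv_eq_deriv_mul_of_integrable (fun z _ => hu z) (fun z _ => hv z) i1 i2 i3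
  -- ibp : ∫ K((x-z)/r) * K'((z-c)/s) = - ∫ (-r⁻¹ K'((x-z)/r)) * (s K((z-c)/s))
  have hre : ∀ z : ℝ, (-r⁻¹ * deriv K ((x - z) / r)) * (s * K ((z - c) / s))
      = (-r⁻¹ * s) * (deriv K ((x - z) / r) * K ((z - c) / s)) := fun z => by ring
  simp_rw [hre] at ibp
  rw [MeasureTheory.integral_const_mul] at ibp
  rw [ibp]
  field_simp

lemma aux_pert {A : ℝ} (a n : ℝ) (K : ℝ → ℝ) (hK : ContDiff ℝ 1 K)
    (hKsupp : Function.support K ⊆ Set.Icc (-A) A)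
    (hn : n ≠ 0) (x c s r : ℝ) (hs : 0 < s) (hr : 0 < r) :
    (∫ u, (s⁻¹ * K ((x - u) / s)) * ((2 * a / (n * r ^ 2)) * deriv K ((u - c) / r)))
      = ∫ u, (r⁻¹ * K ((x - u) / r)) * ((2 * a / (n * s ^ 2)) * deriv K ((u - c) / s)) := by
  have core := aux_core K hK hKsupp x c s r hs hr
  have h1 : ∀ u : ℝ, (s⁻¹ * K ((x - u) / s)) * ((2 * a / (n * r ^ 2)) * deriv K ((u - c) / r))
      = (s⁻¹ * (2 * a / (n * r ^ 2))) * (K ((x - u) / s) * deriv K ((u - c) / r)) :=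
    fun u => by ring
  have h2 : ∀ u : ℝ, (r⁻¹ * K ((x - u) / r)) * ((2 * a / (n * s ^ 2)) * deriv K ((u - c) / s))
      = (r⁻¹ * (2 * a / (n * s ^ 2))) * (K ((x - u) / r) * deriv K ((u - c) / s)) :=
    fun u => by ring
  simp_rw [h1, h2, MeasureTheory.integral_const_mul]
  have hI : (∫ u, K ((x - u) / s) * deriv K ((u - c) / r))
      = (r / s) * ∫ u, K ((x - u) / r) * deriv K ((u - c) / s) := by
    field_simp
    linarith [core]
  rw [hI]
  field_simp

/-- Inversion lemma: for the kernel deconvolution estimates `f̂_t`, one has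
`K_h ⋆ f̂_t = K_t ⋆ f̂_h` whenever `Ah ≤ a` and `At ≤ a`. -/
theorem stmt_3 (a A : ℝ) (ha : 0 < a) (hA : 0 < A)
    (K : ℝ → ℝ) (hK : ContDiff ℝ 1 K)
    (hKsupp : Function.support K ⊆ Set.Icc (-A) A)
    (N : ℕ) (y : Fin N → ℝ) (n : ℝ) (hn : 0 < n)
    (fhat : ℝ → ℝ → ℝ)
    (hfhat : ∀ t x, fhat t x =
      (2 * a / (n * t ^ 2)) *
        ∑' k : ℕ, ∑ i : Fin N, deriv K ((x - (2 * (k : ℝ) + 1) * a - y i) / t))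
    (Kb : ℝ → ℝ → ℝ) (hKb : ∀ h x, Kb h x = h⁻¹ * K (x / h)) :
    ∀ h t : ℝ, 0 < h → 0 < t → A * h ≤ a → A * t ≤ a →
      ∀ x : ℝ, (∫ u, Kb h (x - u) * fhat t u) = ∫ u, Kb t (x - u) * fhat h u := by
  intro h t hh ht _ _ x
  have hKc : Continuous K := hK.continuous
  have hK'c : Continuous (deriv K) := hK.continuous_deriv le_rfl
  have hK'supp : Function.support (deriv K) ⊆ Set.Icc (-A) A :=
    support_deriv_subset.trans (closure_minimal hKsupp isClosed_Icc)
  set c : ℕ → Fin N → ℝ := fun k i => (2 * (k : ℝ) + 1) * a + y i with hc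
  set B : ℝ := |x| + A * h + A * t + ∑ i, |y i| with hB
  set M : ℕ := ⌈B / a⌉₊ + 1 with hM
  have key : ∀ s r : ℝ, 0 < s → 0 < r → A * s + A * r ≤ A * h + A * t →
      (∫ u, Kb s (x - u) * fhat r u)
        = ∑ k ∈ Finset.range M, ∑ i : Fin N,
            ∫ u, (s⁻¹ * K ((x - u) / s)) * ((2 * a / (n * r ^ 2)) * deriv K ((u - c k i) / r)) := by
    intro s r hs hr hsr
    -- pointwise rewriting to a finite sum
    have hpt : ∀ u : ℝ, Kb s (x - u) * fhat r u
        = ∑ k ∈ Finset.range M, (s⁻¹ * K ((x - u) / s)) *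
            ((2 * a / (n * r ^ 2)) * ∑ i : Fin N, deriv K ((u - c k i) / r)) := by
      intro u
      rw [hKb, hfhat, ← tsum_mul_left, ← tsum_mul_left]
      have harg : ∀ (k : ℕ) (i : Fin N),
          (u - (2 * (k : ℝ) + 1) * a - y i) / r = (u - c k i) / r := by
        intro k i; rw [hc]; ring_nf
      refine (tsum_eq_sum (s := Finset.range M) ?_).trans ?_
      · -- vanishing for k ∉ range M
        intro k hk
        rw [Finset.mem_range, not_lt] at hk
        by_contra hne
        rcases mul_ne_zero_iff.mp hne with ⟨hne1, hne2⟩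
        rcases mul_ne_zero_iff.mp hne1 with ⟨-, hne1⟩
        rcases mul_ne_zero_iff.mp hne2 with ⟨-, hne2⟩
        obtain ⟨i, -, hi⟩ := Finset.exists_ne_zero_of_sum_ne_zero hne2
        have m1 := hKsupp (Function.mem_support.mpr hne1)
        have m2 := hK'supp (Function.mem_support.mpr hi)
        rw [Set.mem_Icc, le_div_iff₀ hs, div_le_iff₀ hs] at m1
        rw [Set.mem_Icc, le_div_iff₀ hr, div_le_iff₀ hr] at m2
        -- derive (2k+1)a ≤ B and contradiction with k ≥ M
        have hyi : |y i| ≤ ∑ j, |y j| :=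
          Finset.single_le_sum (fun j _ => abs_nonneg (y j)) (Finset.mem_univ i)
        have hxabs : x ≤ |x| := le_abs_self x
        have hck : (2 * (k : ℝ) + 1) * a ≤ B := by
          have h1 : u - (2 * (k : ℝ) + 1) * a - y i ≤ A * r := m2.2
          have h2 : u ≤ x + A * s := by linarith [m1.1]
          have : (2 * (k : ℝ) + 1) * a ≤ x + A * s + A * r - y i := by linarith
          have hyi' : -y i ≤ |y i| := neg_le_abs (y i)
          rw [hB]; linarith
        have hka : ((M : ℝ)) * a ≤ (2 * (k : ℝ) + 1) * a := by
          have : (M : ℝ) ≤ (k : ℝ) := Nat.cast_le.mpr hk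
          nlinarith [ha.le, Nat.cast_nonneg (α := ℝ) k]
        have hBM : B < (M : ℝ) * a := by
          have h1 : B / a ≤ (⌈B / a⌉₊ : ℝ) := Nat.le_ceil _
          have h2 : B ≤ (⌈B / a⌉₊ : ℝ) * a := by
            rw [div_le_iff₀ ha] at h1; exact h1
          have h3 : ((M : ℝ)) = (⌈B / a⌉₊ : ℝ) + 1 := by rw [hM]; push_cast; ring
          nlinarith
        linarith
      · -- identify the summands
        refine Finset.sum_congr rfl fun k _ => ?_
        congr 1
        congr 1
        refine Finset.sum_congr rfl fun i _ => ?_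
        rw [harg]
    simp_rw [hpt]
    rw [MeasureTheory.integral_finset_sum]
    · refine Finset.sum_congr rfl fun k _ => ?_
      have hdist : ∀ u : ℝ, (s⁻¹ * K ((x - u) / s)) *
            ((2 * a / (n * r ^ 2)) * ∑ i : Fin N, deriv K ((u - c k i) / r))
          = ∑ i : Fin N, (s⁻¹ * K ((x - u) / s)) *
              ((2 * a / (n * r ^ 2)) * deriv K ((u - c k i) / r)) := by
        intro u; rw [Finset.mul_sum, Finset.mul_sum]
      simp_rw [hdist]
      rw [MeasureTheory.integral_finset_sum]
      intro i _
      apply Continuous.integrable_of_hasCompactSupport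
      · exact (continuous_const.mul (hKc.comp
          ((continuous_const.sub continuous_id).div_const s))).mul
          (continuous_const.mul (hK'c.comp
          ((continuous_id.sub continuous_const).div_const r)))
      · exact (((aux_hcs_left hKsupp x s hs).mul_left).mul_right)
    · intro k _
      apply Continuous.integrable_of_hasCompactSupport
      · exact (continuous_const.mul (hKc.comp
          ((continuous_const.sub continuous_id).div_const s))).mul
          (continuous_const.mul (continuous_finset_sum _ fun i _ => hK'c.comp
          ((continuous_id.sub continuous_const).div_const r)))
      · exact (((aux_hcs_left hKsupp x s hs).mul_left).mul_right)
  rw [key h t hh ht (by linarith), key t h ht hh (by linarith)]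
  refine Finset.sum_congr rfl fun k _ => Finset.sum_congr rfl fun i _ => ?_
  exact aux_pert a n K hK hKsupp hn.ne' x (c k i) h t hh ht
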